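/- Suppose p ≠ 0 and m > 0, where m = a·(-|p| + |x - p|) and n = a·(|p| + |x - p|). Then the law of X' is absolutely continuous with respect to Lebesgue measure with density g given by: g(u) = (1/(2(n - m)))·ln(n/m) when |u - p| < m; g(u) = (1/(2(n - m)))·ln( n / |u - p| ) when m ≤ |u - p| < n; and g(u) = 0 when |u - p| ≥ n. -/

import Mathlib

open MeasureTheory ProbabilityTheory
open scoped ENNReal

/-- The uniform distribution on the interval `[s, t]`: Lebesgue measure restricted to
`[s, t]`, scaled by `(t - s)⁻¹`. -/
noncomputable def uniformMeasure (s t : ℝ) : Measure ℝ :=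
  (ENNReal.ofReal (t - s))⁻¹ • volume.restrict (Set.Icc s t)

open Set

section auxiliary

lemma map_affine_volume (p k : ℝ) (hk : k ≠ 0) :
    Measure.map (fun y : ℝ => p + y * k) volume
      = ENNReal.ofReal |k⁻¹| • volume := by
  have h1 : (fun y : ℝ => p + y * k) = (fun z : ℝ => p + z) ∘ (fun y : ℝ => y * k) := rfl
  rw [h1, ← Measure.map_map (measurable_const_add p) (measurable_mul_const k),
    Real.map_volume_mul_right hk, Measure.map_smul, map_add_left_eq_self]

lemma map_affine_uniform (a p k : ℝ) (ha : 0 < a) (hk : 0 < k) :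
    Measure.map (fun y : ℝ => p + y * k) (uniformMeasure (-a) a)
      = volume.withDensity
          ((Set.Icc (p - a*k) (p + a*k)).indicator fun _ => ENNReal.ofReal ((2*a*k)⁻¹)) := by
  have hmeas : Measurable (fun y : ℝ => p + y * k) := by measurability
  have hpre : (fun y : ℝ => p + y * k) ⁻¹' (Set.Icc (p - a*k) (p + a*k)) = Set.Icc (-a) a := by
    ext y
    simp only [Set.mem_preimage, Set.mem_Icc]
    constructor
    · rintro ⟨h1, h2⟩
      constructor <;> nlinarith
    · rintro ⟨h1, h2⟩
      constructor <;> nlinarith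
  rw [uniformMeasure, Measure.map_smul, ← hpre,
    ← Measure.restrict_map hmeas measurableSet_Icc, map_affine_volume p k hk.ne' ,
    withDensity_indicator measurableSet_Icc, withDensity_const,
    Measure.restrict_smul, smul_smul]
  congr 1
  show (ENNReal.ofReal (a - -a))⁻¹ * ENNReal.ofReal |k⁻¹| = ENNReal.ofReal ((2*a*k)⁻¹)
  rw [abs_of_pos (inv_pos.mpr hk), ← ENNReal.ofReal_inv_of_pos (by linarith),
    ← ENNReal.ofReal_mul (inv_nonneg.mpr (by linarith))]
  congr 1
  rw [← mul_inv]
  congr 1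
  ring

lemma helper_inc (a q r w : ℝ) (ha : 0 < a) (hq : 0 < q) (hr : r < 0) (hw : 0 ≤ w)
    (hwn : w ≤ a*q*(2 - r)) :
    ∫⁻ c in Set.Icc (0:ℝ) 2,
      (if w ≤ a * (q * (c - r)) then ENNReal.ofReal ((2*(a*(q*(c-r))))⁻¹) else 0)
      = ENNReal.ofReal ((2*(a*q)) ⁻¹ * Real.log ((a*q*(2-r)) / max (a*q*(-r)) w)) := by
  have haq : 0 < a * q := mul_pos ha hq
  set c₀ : ℝ := max 0 (r + w/(a*q)) with hc₀
  have hc₀0 : 0 ≤ c₀ := le_max_left _ _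
  have hc₀2 : c₀ ≤ 2 := by
    apply max_le (by norm_num)
    rw [← le_sub_iff_add_le', div_le_iff₀ haq]
    linarith [hwn]
  have hc₀r : 0 < c₀ - r := by
    have : -r > 0 := by linarith
    have := le_max_left 0 (r + w/(a*q))
    linarith
  -- Step A
  have stepA : ∫⁻ c in Set.Icc (0:ℝ) 2,
      (if w ≤ a * (q * (c - r)) then ENNReal.ofReal ((2*(a*(q*(c-r))))⁻¹) else 0)
      = ∫⁻ c in Set.Icc c₀ 2, ENNReal.ofReal ((2*(a*(q*(c-r))))⁻¹) := by
    rw [← lintegral_indicator measurableSet_Icc, ← lintegral_indicator measurableSet_Icc]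
    congr 1
    funext c
    by_cases h1 : c ∈ Set.Icc (0:ℝ) 2
    · rw [indicator_of_mem h1]
      by_cases h2 : w ≤ a * (q * (c - r))
      · rw [if_pos h2, indicator_of_mem]
        rw [Set.mem_Icc] at h1 ⊢
        refine ⟨max_le h1.1 ?_, h1.2⟩
        rw [← sub_nonneg]
        have : w / (a*q) ≤ c - r := by
          rw [div_le_iff₀ haq]; nlinarith [h2]
        linarith
      · rw [if_neg h2, indicator_of_notMem]
        rw [Set.mem_Icc]
        push_neg
        intro hc
        exfalso
        apply h2
        have hrc : r + w/(a*q) ≤ c := le_trans (le_max_right 0 _) hc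
        have : w / (a*q) ≤ c - r := by linarith
        rw [div_le_iff₀ haq] at this
        nlinarith
    · rw [indicator_of_notMem h1, indicator_of_notMem]
      intro hc
      exact h1 ⟨le_trans hc₀0 hc.1, hc.2⟩
  rw [stepA]
  -- Step B: convert to Bochner integral
  have hcont : ContinuousOn (fun c : ℝ => (2*(a*(q*(c-r))))⁻¹) (Set.Icc c₀ 2) := by
    apply ContinuousOn.inv₀
    · fun_prop
    · intro c hc
      have := hc.1
      have : 0 < c - r := by rw [Set.mem_Icc] at hc; linarith [hc.1]
      positivity
  have hint : IntegrableOn (fun c : ℝ => (2*(a*(q*(c-r))))⁻¹) (Set.Icc c₀ 2) volume :=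
    hcont.integrableOn_Icc
  have hnn : 0 ≤ᵐ[volume.restrict (Set.Icc c₀ 2)] (fun c : ℝ => (2*(a*(q*(c-r))))⁻¹) := by
    filter_upwards [ae_restrict_mem measurableSet_Icc] with c hc
    have : 0 < c - r := by rw [Set.mem_Icc] at hc; linarith [hc.1]
    positivity
  rw [← MeasureTheory.ofReal_integral_eq_lintegral_ofReal hint hnn]
  congr 1
  -- Step C: evaluate
  rw [MeasureTheory.integral_Icc_eq_integral_Ioc, ← intervalIntegral.integral_of_le hc₀2]
  have hsimp : (fun c : ℝ => (2*(a*(q*(c-r))))⁻¹) = fun c : ℝ => (2*(a*q))⁻¹ * (c-r)⁻¹ := by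
    funext c
    rw [← mul_inv]
    ring_nf
  rw [hsimp, intervalIntegral.integral_const_mul]
  congr 1
  have := intervalIntegral.integral_comp_sub_right (a := c₀) (b := 2) (fun y : ℝ => y⁻¹) r
  rw [this, integral_inv]
  · congr 1
    rw [div_eq_div_iff hc₀r.ne' (lt_of_lt_of_le (by nlinarith : (0:ℝ) < a*q*(-r)) (le_max_left _ _)).ne']
    have hmax : a * q * (c₀ - r) = max (a*q*(-r)) w := by
      rcases max_cases 0 (r + w/(a*q)) with ⟨h1, h2⟩ | ⟨h1, h2⟩
      · rw [hc₀, h1]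
        rw [max_eq_left]
        · ring
        · rw [← sub_nonneg] at h2 ⊢
          have : -(r + w/(a*q)) ≥ 0 := by linarith
          have hh : w / (a*q) ≤ -r := by linarith
          rw [div_le_iff₀ haq] at hh
          nlinarith
      · rw [hc₀, h1]
        rw [max_eq_right]
        · field_simp
          ring
        · have hh : -r ≤ w / (a*q) := by linarith
          rw [le_div_iff₀ haq] at hh
          nlinarith
    nlinarith [hmax, max_le_iff.mp (le_refl (max (a*q*(-r)) w))]
  · intro h
    rcases Set.mem_uIcc.mp h with ⟨h1, _⟩ | ⟨h1, _⟩ <;> linarith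

lemma lint_reflect (f : ℝ → ℝ≥0∞) (hf : Measurable f) :
    ∫⁻ c in Set.Icc (0:ℝ) 2, f (2 - c) = ∫⁻ c in Set.Icc (0:ℝ) 2, f c := by
  have hT : Measurable (fun x : ℝ => 2 - x) := by fun_prop
  have hpre : (fun x : ℝ => 2 - x) ⁻¹' (Set.Icc (0:ℝ) 2) = Set.Icc 0 2 := by
    ext y; simp only [Set.mem_preimage, Set.mem_Icc]
    constructor <;> rintro ⟨h1, h2⟩ <;> constructor <;> linarith
  have hmap : Measure.map (fun x : ℝ => 2 - x) (volume.restrict (Set.Icc (0:ℝ) 2))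
      = volume.restrict (Set.Icc (0:ℝ) 2) := by
    conv_lhs => rw [← hpre]
    rw [← Measure.restrict_map hT measurableSet_Icc, Measure.map_sub_left_eq_self volume 2]
  conv_rhs => rw [← hmap]
  rw [lintegral_map hf hT]

lemma helper_dec (a q r w : ℝ) (ha : 0 < a) (hq : 0 < q) (hr : 2 < r) (hw : 0 ≤ w)
    (hwn : w ≤ a*q*r) :
    ∫⁻ c in Set.Icc (0:ℝ) 2,
      (if w ≤ a * (q * (r - c)) then ENNReal.ofReal ((2*(a*(q*(r-c))))⁻¹) else 0)
      = ENNReal.ofReal ((2*(a*q))⁻¹ * Real.log ((a*q*r) / max (a*q*(r-2)) w)) := by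
  set f : ℝ → ℝ≥0∞ := fun c =>
    if w ≤ a * (q * (c - (2 - r))) then ENNReal.ofReal ((2*(a*(q*(c-(2-r)))))⁻¹) else 0 with hfdef
  have hfm : Measurable f := by
    apply Measurable.ite _ (by fun_prop) measurable_const
    exact measurableSet_le measurable_const (by fun_prop)
  have key : ∀ c : ℝ, f (2 - c) = (if w ≤ a * (q * (r - c)) then
      ENNReal.ofReal ((2*(a*(q*(r-c))))⁻¹) else 0) := by
    intro c
    simp only [hfdef, show (2:ℝ) - c - (2 - r) = r - c from by ring]
  calc ∫⁻ c in Set.Icc (0:ℝ) 2,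
      (if w ≤ a * (q * (r - c)) then ENNReal.ofReal ((2*(a*(q*(r-c))))⁻¹) else 0)
      = ∫⁻ c in Set.Icc (0:ℝ) 2, f (2 - c) := by
        apply lintegral_congr; intro c; rw [key c]
    _ = ∫⁻ c in Set.Icc (0:ℝ) 2, f c := lint_reflect f hfm
    _ = ENNReal.ofReal ((2*(a*q))⁻¹ * Real.log ((a*q*(2-(2-r))) / max (a*q*(-(2-r))) w)) :=
        helper_inc a q (2 - r) w ha hq (by linarith) hw (by rw [show (2:ℝ)-(2-r) = r from by ring]; exact hwn)
    _ = ENNReal.ofReal ((2*(a*q))⁻¹ * Real.log ((a*q*r) / max (a*q*(r-2)) w)) := by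
        rw [show (2:ℝ)-(2-r) = r from by ring, show -((2:ℝ)-r) = r-2 from by ring]

lemma pointwise_density (a p x m n : ℝ) (ha : 0 < a) (hp : p ≠ 0)
    (hm : m = a * (-|p| + |x - p|)) (hn : n = a * (|p| + |x - p|)) (hm0 : 0 < m)
    (g : ℝ → ℝ)
    (hg1 : ∀ u, |u - p| < m → g u = (1 / (2 * (n - m))) * Real.log (n / m))
    (hg2 : ∀ u, m ≤ |u - p| → |u - p| < n →
      g u = (1 / (2 * (n - m))) * Real.log (n / |u - p|))
    (hg3 : ∀ u, n ≤ |u - p| → g u = 0) (u : ℝ) :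
    (ENNReal.ofReal 2)⁻¹ *
      ∫⁻ c in Set.Icc (0:ℝ) 2,
        (if |u - p| ≤ a * |c * p - x| then ENNReal.ofReal ((2*(a*|c * p - x|))⁻¹) else 0)
      = ENNReal.ofReal (g u) := by
  set w := |u - p| with hw
  have hwnn : 0 ≤ w := abs_nonneg _
  set q := |p| with hq
  have hq0 : 0 < q := abs_pos.mpr hp
  set r := x / p with hr
  have hxr : x = p * r := by rw [hr]; field_simp
  have habs : ∀ c : ℝ, |c * p - x| = q * |c - r| := by
    intro c
    rw [hxr, show c * p - p * r = p * (c - r) from by ring, abs_mul]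
  have hxp : |x - p| = q * |r - 1| := by
    rw [hxr, show p * r - p = p * (r - 1) from by ring, abs_mul]
  have hxpq : q < |x - p| := by
    rw [hm] at hm0
    by_contra h'
    push_neg at h'
    nlinarith
  have hr1 : 1 < |r - 1| := by
    have : q * 1 < q * |r - 1| := by rw [mul_one, ← hxp]; exact hxpq
    exact lt_of_mul_lt_mul_left this (le_of_lt hq0)
  have hrcases : r < 0 ∨ 2 < r := by
    rcases lt_abs.mp hr1 with h | h
    · right; linarith
    · left; linarith
  have h2inv : (ENNReal.ofReal 2)⁻¹ = ENNReal.ofReal 2⁻¹ := by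
    rw [← ENNReal.ofReal_inv_of_pos (by norm_num)]
  rcases hrcases with hrlt | hrgt
  · -- r < 0 : m = a*q*(-r), n = a*q*(2-r)
    have hxp' : |x - p| = q * (1 - r) := by rw [hxp, abs_of_neg (by linarith : r - 1 < 0)]; ring
    have hmv : m = a * q * (-r) := by rw [hm, hxp']; ring
    have hnv : n = a * q * (2 - r) := by rw [hn, hxp']; ring
    by_cases hwn : w ≤ n
    · have hcong : ∫⁻ c in Set.Icc (0:ℝ) 2,
          (if w ≤ a * |c * p - x| then ENNReal.ofReal ((2*(a*|c * p - x|))⁻¹) else 0)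
          = ∫⁻ c in Set.Icc (0:ℝ) 2,
          (if w ≤ a * (q * (c - r)) then ENNReal.ofReal ((2*(a*(q*(c-r))))⁻¹) else 0) := by
        apply setLIntegral_congr_fun measurableSet_Icc
        intro c hc
        dsimp only
        rw [habs c, abs_of_nonneg (by rcases hc with ⟨h1,_⟩; linarith : (0:ℝ) ≤ c - r)]
      rw [hcong, helper_inc a q r w ha hq0 hrlt hwnn (by rw [← hnv]; exact hwn),
        h2inv, ← ENNReal.ofReal_mul (by norm_num)]
      congr 1
      rw [← hmv, ← hnv]
      rcases lt_or_ge w m with hcase | hcase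
      · rw [hg1 u (by rw [← hw]; exact hcase), max_eq_left (le_of_lt hcase)]
        have : n - m = 2 * (a * q) := by rw [hmv, hnv]; ring
        rw [this]
        field_simp
      · rcases lt_or_ge w n with hcase2 | hcase2
        · rw [hg2 u (by rw [← hw]; exact hcase) (by rw [← hw]; exact hcase2), max_eq_right hcase]
          have : n - m = 2 * (a * q) := by rw [hmv, hnv]; ring
          rw [this, ← hw]
          field_simp
        · -- w = n
          have hweq : w = n := le_antisymm hwn hcase2
          rw [hg3 u (by rw [← hw]; linarith), max_eq_right hcase, hweq,
            div_self (by nlinarith [hnv] : n ≠ 0), Real.log_one]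
          ring
    · -- w > n : integrand vanishes
      push_neg at hwn
      have hzero : ∫⁻ c in Set.Icc (0:ℝ) 2,
          (if w ≤ a * |c * p - x| then ENNReal.ofReal ((2*(a*|c * p - x|))⁻¹) else 0)
          = ∫⁻ _ in Set.Icc (0:ℝ) 2, (0:ℝ≥0∞) := by
        apply setLIntegral_congr_fun measurableSet_Icc
        intro c hc
        dsimp only
        rw [if_neg]
        push_neg
        rw [habs c, abs_of_nonneg (by rcases hc with ⟨h1,_⟩; linarith : (0:ℝ) ≤ c - r)]
        have : a * (q * (c - r)) ≤ n := by
          rw [hnv]; rcases hc with ⟨h1, h2⟩; nlinarith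
        linarith
      rw [hzero, lintegral_zero, mul_zero, hg3 u (by rw [← hw]; linarith), ENNReal.ofReal_zero]
  · -- 2 < r : m = a*q*(r-2), n = a*q*r
    have hxp' : |x - p| = q * (r - 1) := by rw [hxp, abs_of_pos (by linarith : 0 < r - 1)]
    have hmv : m = a * q * (r - 2) := by rw [hm, hxp']; ring
    have hnv : n = a * q * r := by rw [hn, hxp']; ring
    by_cases hwn : w ≤ n
    · have hcong : ∫⁻ c in Set.Icc (0:ℝ) 2,
          (if w ≤ a * |c * p - x| then ENNReal.ofReal ((2*(a*|c * p - x|))⁻¹) else 0)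
          = ∫⁻ c in Set.Icc (0:ℝ) 2,
          (if w ≤ a * (q * (r - c)) then ENNReal.ofReal ((2*(a*(q*(r-c))))⁻¹) else 0) := by
        apply setLIntegral_congr_fun measurableSet_Icc
        intro c hc
        dsimp only
        rw [habs c, abs_of_nonpos (by rcases hc with ⟨_,h2⟩; linarith : c - r ≤ 0),
          show -(c - r) = r - c from by ring]
      rw [hcong, helper_dec a q r w ha hq0 hrgt hwnn (by rw [← hnv]; exact hwn),
        h2inv, ← ENNReal.ofReal_mul (by norm_num)]
      congr 1
      rw [← hmv, ← hnv]
      rcases lt_or_ge w m with hcase | hcase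
      · rw [hg1 u (by rw [← hw]; exact hcase), max_eq_left (le_of_lt hcase)]
        have : n - m = 2 * (a * q) := by rw [hmv, hnv]; ring
        rw [this]
        field_simp
      · rcases lt_or_ge w n with hcase2 | hcase2
        · rw [hg2 u (by rw [← hw]; exact hcase) (by rw [← hw]; exact hcase2), max_eq_right hcase]
          have : n - m = 2 * (a * q) := by rw [hmv, hnv]; ring
          rw [this, ← hw]
          field_simp
        · have hweq : w = n := le_antisymm hwn hcase2
          rw [hg3 u (by rw [← hw]; linarith), max_eq_right hcase, hweq,
            div_self (by nlinarith [hnv, hq0, ha, hrgt] : n ≠ 0), Real.log_one]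
          ring
    · push_neg at hwn
      have hzero : ∫⁻ c in Set.Icc (0:ℝ) 2,
          (if w ≤ a * |c * p - x| then ENNReal.ofReal ((2*(a*|c * p - x|))⁻¹) else 0)
          = ∫⁻ _ in Set.Icc (0:ℝ) 2, (0:ℝ≥0∞) := by
        apply setLIntegral_congr_fun measurableSet_Icc
        intro c hc
        dsimp only
        rw [if_neg]
        push_neg
        rw [habs c, abs_of_nonpos (by rcases hc with ⟨_,h2⟩; linarith : c - r ≤ 0),
          show -(c - r) = r - c from by ring]
        have : a * (q * (r - c)) ≤ n := by
          rw [hnv]; rcases hc with ⟨h1, h2⟩; nlinarith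
        linarith
      rw [hzero, lintegral_zero, mul_zero, hg3 u (by rw [← hw]; linarith), ENNReal.ofReal_zero]

end auxiliary

/-- Theorem 1, case `m > 0`: the law of `X' = p + A * |C * p - x|` has density `g`
with respect to Lebesgue measure, where `g` is given by equation (16). -/
theorem gwo_density_case_m_pos
    {Ω : Type*} [MeasurableSpace Ω] (P : Measure Ω) [IsProbabilityMeasure P]
    (a p x : ℝ) (ha : 0 < a) (hp : p ≠ 0) (A C : Ω → ℝ) (hA : Measurable A) (hC : Measurable C)
    (hInd : IndepFun A C P)
    (hAlaw : Measure.map A P = uniformMeasure (-a) a)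
    (hClaw : Measure.map C P = uniformMeasure 0 2)
    (m n : ℝ) (hm : m = a * (-|p| + |x - p|)) (hn : n = a * (|p| + |x - p|))
    (hm0 : 0 < m) (g : ℝ → ℝ)
    (hg1 : ∀ u, |u - p| < m → g u = (1 / (2 * (n - m))) * Real.log (n / m))
    (hg2 : ∀ u, m ≤ |u - p| → |u - p| < n →
      g u = (1 / (2 * (n - m))) * Real.log (n / |u - p|))
    (hg3 : ∀ u, n ≤ |u - p| → g u = 0) :
    Measure.map (fun ω => p + A ω * |C ω * p - x|) P
      = volume.withDensity (fun u => ENNReal.ofReal (g u)) := by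
  -- notation
  set μA := uniformMeasure (-a) a with hμA
  set μC := uniformMeasure (0:ℝ) 2 with hμC
  have hq0 : (0:ℝ) < |p| := abs_pos.mpr hp
  -- k(c) > 0 on [0,2]
  have hkpos : ∀ c ∈ Set.Icc (0:ℝ) 2, 0 < |c * p - x| := by
    intro c hc
    rw [abs_pos]
    intro hzero
    -- c * p = x, so x/p = c ∈ [0,2]; contradicts m > 0
    have hx : x = c * p := by linarith [sub_eq_zero.mp hzero]
    have hxp : |x - p| ≤ |p| := by
      rw [hx, show c * p - p = (c - 1) * p from by ring, abs_mul]
      rcases hc with ⟨h1, h2⟩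
      have : |c - 1| ≤ 1 := by rw [abs_le]; constructor <;> linarith
      nlinarith [abs_nonneg p]
    rw [hm] at hm0
    nlinarith
  -- finiteness instances
  have hfinA : IsFiniteMeasure μA := by
    constructor
    rw [hμA, uniformMeasure]
    simp only [Measure.smul_apply, Measure.restrict_apply MeasurableSet.univ, Set.univ_inter,
      Real.volume_Icc, smul_eq_mul]
    exact ENNReal.mul_lt_top (ENNReal.inv_lt_top.mpr (by rw [ENNReal.ofReal_pos]; linarith)) ENNReal.ofReal_lt_top
  have hfinC : IsFiniteMeasure μC := by
    constructor
    rw [hμC, uniformMeasure]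
    simp only [Measure.smul_apply, Measure.restrict_apply MeasurableSet.univ, Set.univ_inter,
      Real.volume_Icc, smul_eq_mul]
    exact ENNReal.mul_lt_top (ENNReal.inv_lt_top.mpr (by norm_num)) ENNReal.ofReal_lt_top
  -- step 1: joint law
  have hjoint : Measure.map (fun ω => (A ω, C ω)) P = μA.prod μC := by
    rw [← hAlaw, ← hClaw]
    exact (indepFun_iff_map_prod_eq_prod_map_map hA.aemeasurable hC.aemeasurable).mp hInd
  have hFmeas : Measurable (fun q : ℝ × ℝ => p + q.1 * |q.2 * p - x|) := by fun_prop
  have hstep1 : Measure.map (fun ω => p + A ω * |C ω * p - x|) P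
      = Measure.map (fun q : ℝ × ℝ => p + q.1 * |q.2 * p - x|) (μA.prod μC) := by
    rw [← hjoint, Measure.map_map hFmeas (hA.prodMk hC)]
    rfl
  rw [hstep1]
  -- the 2-variable density integrand
  set H : ℝ → ℝ → ℝ≥0∞ := fun c u =>
    if |u - p| ≤ a * |c * p - x| then ENNReal.ofReal ((2*(a*|c * p - x|))⁻¹) else 0 with hHdef
  have hHmeas : Measurable (fun cu : ℝ × ℝ => H cu.1 cu.2) := by
    apply Measurable.ite _ _ measurable_const
    · exact measurableSet_le (by fun_prop) (by fun_prop)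
    · fun_prop
  -- prove measure equality set by set
  ext s hs
  rw [Measure.map_apply hFmeas hs, withDensity_apply _ hs]
  have hprod : (μA.prod μC) ((fun q : ℝ × ℝ => p + q.1 * |q.2 * p - x|) ⁻¹' s)
      = ∫⁻ c, μA ((fun y => p + y * |c * p - x|) ⁻¹' s) ∂μC := by
    rw [Measure.prod_apply_symm (hFmeas hs)]
    rfl
  rw [hprod]
  -- expand μC and evaluate the slice for c ∈ [0,2]
  have hslice : ∀ c ∈ Set.Icc (0:ℝ) 2,
      μA ((fun y => p + y * |c * p - x|) ⁻¹' s) = ∫⁻ u in s, H c u ∂volume := by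
    intro c hc
    have hk := hkpos c hc
    have haff : Measurable (fun y : ℝ => p + y * |c * p - x|) := by fun_prop
    rw [← Measure.map_apply haff hs, hμA, map_affine_uniform a p (|c * p - x|) ha hk,
      withDensity_apply _ hs]
    apply setLIntegral_congr_fun hs
    intro u hu
    simp only [hHdef]
    by_cases hcond : |u - p| ≤ a * |c * p - x|
    · rw [if_pos hcond, Set.indicator_of_mem]
      · congr 1
        ring_nf
      · rw [Set.mem_Icc]
        rcases abs_le.mp hcond with ⟨h1, h2⟩
        constructor <;> linarith
    · rw [if_neg hcond, Set.indicator_of_notMem]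
      intro hmem
      apply hcond
      rw [Set.mem_Icc] at hmem
      rw [abs_le]
      constructor <;> linarith [hmem.1, hmem.2]
  -- rewrite μC-integral as a restricted volume integral
  have hCexp : ∫⁻ c, μA ((fun y => p + y * |c * p - x|) ⁻¹' s) ∂μC
      = (ENNReal.ofReal 2)⁻¹ * ∫⁻ c in Set.Icc (0:ℝ) 2, ∫⁻ u in s, H c u ∂volume ∂volume := by
    rw [hμC, uniformMeasure, lintegral_smul_measure]
    norm_num
    congr 1
    apply setLIntegral_congr_fun measurableSet_Icc
    intro c hc
    exact hslice c hc
  rw [hCexp]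
  -- swap the integrals
  have hswap : ∫⁻ c in Set.Icc (0:ℝ) 2, ∫⁻ u in s, H c u ∂volume ∂volume
      = ∫⁻ u in s, ∫⁻ c in Set.Icc (0:ℝ) 2, H c u ∂volume ∂volume := by
    exact lintegral_lintegral_swap (hHmeas.aemeasurable)
  rw [hswap, ← lintegral_const_mul _ ?mble]
  case mble =>
    exact (hHmeas.lintegral_prod_left')
  apply setLIntegral_congr_fun hs
  intro u hu
  exact pointwise_density a p x m n ha hp hm hn hm0 g hg1 hg2 hg3 u
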